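/- If a graph G has treebandwidth at most k, then for every positive integer p, G admits a p-centered colouring using at most pk+1 colours. -/

import Mathlib

open SimpleGraph

/-- `x` is a (reflexive) ancestor of `y` in the tree `T` rooted at `r`,
expressed metrically: `x` lies on the unique `r`–`y` path. -/
def AncIn {V : Type*} (T : SimpleGraph V) (r x y : V) : Prop :=
  T.dist r x + T.dist x y = T.dist r y

/-- A tree-layout of `G`: a rooted tree on the vertex set of `G` such that the endpoints
of every edge of `G` are in ancestor-descendant relation. -/
structure TreeLayout {V : Type*} (G : SimpleGraph V) where
  tree : SimpleGraph V
  isTree : tree.IsTree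
  root : V
  layout : ∀ ⦃x y : V⦄, G.Adj x y → AncIn tree root x y ∨ AncIn tree root y x

namespace TreeLayout

variable {V : Type*} {G : SimpleGraph V}

/-- `x` is an ancestor of `y` (reflexively) in the tree-layout. -/
def Anc (L : TreeLayout G) (x y : V) : Prop := AncIn L.tree L.root x y

def StrictAnc (L : TreeLayout G) (x y : V) : Prop := L.Anc x y ∧ x ≠ y

/-- The bandwidth of the tree-layout is at most `k`: neighbours in `G` are at
tree-distance at most `k`. -/
def BandwidthLE (L : TreeLayout G) (k : ℕ) : Prop :=
  ∀ ⦃x y : V⦄, G.Adj x y → L.tree.dist x y ≤ k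

/-- The interval `[a,b]` of the tree-layout: vertices on the tree path from `a` to `b`
(for `a` an ancestor of `b`). -/
def interval (L : TreeLayout G) (a b : V) : Set V := {z : V | L.Anc a z ∧ L.Anc z b}

end TreeLayout

/-- Treebandwidth: the minimum bandwidth over tree-layouts of `G`. -/
noncomputable def treebandwidth {V : Type*} (G : SimpleGraph V) : ℕ :=
  sInf {k | ∃ L : TreeLayout G, L.BandwidthLE k}

/-- Treedepth: the minimum depth (number of vertices on a root-to-leaf path) of a
tree-layout (elimination tree) of `G`. -/
noncomputable def treedepth {V : Type*} (G : SimpleGraph V) : ℕ :=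
  sInf {k | ∃ L : TreeLayout G, ∀ v : V, L.tree.dist L.root v + 1 ≤ k}

/-- A tree-partition of `G`: a partition of `V(G)` indexed by the nodes of a tree such that
every edge of `G` has both ends in one part or in parts indexed by adjacent nodes. -/
structure TreePartition {V : Type*} (G : SimpleGraph V) where
  ι : Type
  tree : SimpleGraph ι
  isTree : tree.IsTree
  part : V → ι
  adj : ∀ ⦃x y : V⦄, G.Adj x y → part x = part y ∨ tree.Adj (part x) (part y)

/-- Tree-partition-width: minimum over tree-partitions of the maximum part size. -/
noncomputable def treePartitionWidth {V : Type*} (G : SimpleGraph V) : ℕ :=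
  sInf {k | ∃ P : TreePartition G, ∀ i : P.ι, {v : V | P.part v = i}.ncard ≤ k}

/-- The connected component of `v` in the subgraph of `G` induced by `S`. -/
def connCompIn {V : Type*} (G : SimpleGraph V) (S : Set V) (v : V) : Set V :=
  {w : V | ∃ (hv : v ∈ S) (hw : w ∈ S), (G.induce S).Reachable ⟨v, hv⟩ ⟨w, hw⟩}

/-- `RootedTreedepthLE G U S n` expresses `td(G[S], U) ≤ n` for the rooted treedepth:
it is `0` when `S` misses `U`, and otherwise one may delete one vertex from each
connected component and recurse. -/
inductive RootedTreedepthLE {V : Type*} (G : SimpleGraph V) (U : Set V) : Set V → ℕ → Prop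
  | base (S : Set V) (n : ℕ) (h : S ∩ U = ∅) : RootedTreedepthLE G U S n
  | step (S : Set V) (n : ℕ) (pick : ∀ v : V, v ∈ S → V)
      (hpick : ∀ (v : V) (hv : v ∈ S), pick v hv ∈ connCompIn G S v)
      (h : ∀ (v : V) (hv : v ∈ S),
        RootedTreedepthLE G U (connCompIn G S v \ {pick v hv}) n) :
      RootedTreedepthLE G U S (n + 1)

/-- A `U`-rooted minor model of the path on `k` vertices in `G`. -/
structure RootedPathMinor {V : Type*} (G : SimpleGraph V) (U : Set V) (k : ℕ) where
  branch : Fin k → Set V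
  connected : ∀ i, (G.induce (branch i)).Connected
  disjoint : ∀ i j, i ≠ j → Disjoint (branch i) (branch j)
  rooted : ∀ i, (branch i ∩ U).Nonempty
  adj : ∀ i j : Fin k, (j : ℕ) = (i : ℕ) + 1 → ∃ a ∈ branch i, ∃ b ∈ branch j, G.Adj a b

/-- A subdivision of the `k`-fan in `G` with universal (center) vertex `v`:
branch vertices `b 0, …, b (k-1)` of the path, internally disjoint spokes from `v`
and internally disjoint path segments between consecutive branch vertices. -/
structure FanSubdivision {V : Type*} (G : SimpleGraph V) (v : V) (k : ℕ) where
  b : Fin k → V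
  binj : Function.Injective b
  bne : ∀ i, b i ≠ v
  spoke : ∀ i : Fin k, G.Walk v (b i)
  spokePath : ∀ i, (spoke i).IsPath
  seg : ∀ (i : Fin k) (h : (i : ℕ) + 1 < k), G.Walk (b i) (b ⟨(i : ℕ) + 1, h⟩)
  segPath : ∀ i h, (seg i h).IsPath
  vNotinSeg : ∀ i h, v ∉ (seg i h).support
  spokeDisj : ∀ i j, i ≠ j →
    {x | x ∈ (spoke i).support} ∩ {x | x ∈ (spoke j).support} = {v}
  spokeSegDisj : ∀ i j h,
    {x | x ∈ (spoke i).support} ∩ {x | x ∈ (seg j h).support} ⊆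
      ({b i} : Set V) ∩ {b j, b ⟨(j : ℕ) + 1, h⟩}
  segDisj : ∀ i j hi hj, i ≠ j →
    {x | x ∈ (seg i hi).support} ∩ {x | x ∈ (seg j hj).support} ⊆
      ({b i, b ⟨(i : ℕ) + 1, hi⟩} : Set V) ∩ {b j, b ⟨(j : ℕ) + 1, hj⟩}

/-- A `p`-centered colouring: every (nonempty) connected induced subgraph either receives
more than `p` colours or has a uniquely coloured vertex. -/
def IsPCenteredColoring {V : Type*} (G : SimpleGraph V) (p : ℕ) (c : V → ℕ) : Prop :=
  ∀ S : Set V, S.Nonempty → (G.induce S).Connected →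
    p < (c '' S).ncard ∨ ∃ x ∈ S, ∀ y ∈ S, c y = c x → y = x

/-- Treewidth, characterised via tree-layouts: the minimum over tree-layouts of the maximum
over nodes `u` of the number of strict ancestors of `u` that are `G`-neighbours of some
descendant of `u` (including `u`). -/
noncomputable def treewidthTL {V : Type*} (G : SimpleGraph V) : ℕ :=
  sInf {k | ∃ L : TreeLayout G, ∀ u : V,
    {a : V | L.StrictAnc a u ∧ ∃ d : V, L.Anc u d ∧ G.Adj a d}.ncard ≤ k}

/-- The pruned subtree of `x` in a tree-layout: descendants of `x` (including `x`) having a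
neighbour of `x` among their own descendants. -/
def prunedSubtree {V : Type*} {G : SimpleGraph V} (L : TreeLayout G) (x : V) : Set V :=
  {y : V | L.Anc x y ∧ ∃ d : V, L.Anc y d ∧ G.Adj x d}

/-- Treespan: the minimum over tree-layouts of (maximum size of a pruned subtree minus one). -/
noncomputable def treespan {V : Type*} (G : SimpleGraph V) : ℕ :=
  sInf {k | ∃ L : TreeLayout G, ∀ x : V, (prunedSubtree L x).ncard ≤ k + 1}

/-- A tree decomposition of `G`. -/
structure TreeDecomp {V : Type*} (G : SimpleGraph V) where
  ι : Type
  tree : SimpleGraph ι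
  isTree : tree.IsTree
  bag : ι → Set V
  coverV : ∀ v : V, ∃ t, v ∈ bag t
  coverE : ∀ ⦃x y : V⦄, G.Adj x y → ∃ t, x ∈ bag t ∧ y ∈ bag t
  subtree : ∀ v : V, (tree.induce {t : ι | v ∈ bag t}).Connected

/-- Domino treewidth: minimum width over tree decompositions in which every vertex
belongs to at most two bags. -/
noncomputable def dominoTreewidth {V : Type*} (G : SimpleGraph V) : ℕ :=
  sInf {k | ∃ D : TreeDecomp G, (∀ v : V, {t : D.ι | v ∈ D.bag t}.ncard ≤ 2) ∧
    ∀ t : D.ι, (D.bag t).ncard ≤ k + 1}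

/-- Edge-treewidth via tree-layouts: the minimum over tree-layouts of the maximum over nodes
`u` of the number of edges with one endpoint a descendant of `u` (including `u`) and the other
a strict ancestor of `u`. -/
noncomputable def edgeTreewidth {V : Type*} (G : SimpleGraph V) : ℕ :=
  sInf {k | ∃ L : TreeLayout G, ∀ u : V,
    {p : V × V | L.StrictAnc p.1 u ∧ L.Anc u p.2 ∧ G.Adj p.1 p.2}.ncard ≤ k}

/-- `S` is a block (2-connected component) of `G`: a maximal connected set of vertices whose
induced subgraph has no cutvertex. -/
def IsBlock {V : Type*} (G : SimpleGraph V) (S : Set V) : Prop :=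
  S.Nonempty ∧ (G.induce S).Connected ∧
    (∀ x ∈ S, (G.induce (S \ {x})).Preconnected) ∧
    ∀ S' : Set V, S ⊆ S' → (G.induce S').Connected →
      (∀ x ∈ S', (G.induce (S' \ {x})).Preconnected) → S' = S

/-- Biconnected maximum degree: the maximum over blocks of `G` of the maximum degree
inside the block. -/
noncomputable def biconnMaxDegree {V : Type*} (G : SimpleGraph V) : ℕ :=
  sSup {d | ∃ (S : Set V) (v : V), IsBlock G S ∧ v ∈ S ∧ d = {w ∈ S | G.Adj v w}.ncard}

/-- `G` is 3-connected: more than 3 vertices, and removing any two vertices leaves it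
connected. -/
def ThreeConnected {V : Type*} (G : SimpleGraph V) : Prop :=
  3 < Nat.card V ∧ ∀ x y : V, (G.induce {v : V | v ≠ x ∧ v ≠ y}).Connected

/-- `G` has `H` as a minor (branch-set model). -/
def HasMinor {V W : Type*} (G : SimpleGraph V) (H : SimpleGraph W) : Prop :=
  ∃ B : W → Set V, (∀ w, (G.induce (B w)).Connected) ∧
    (∀ w w', w ≠ w' → Disjoint (B w) (B w')) ∧
    ∀ ⦃w w'⦄, H.Adj w w' → ∃ a ∈ B w, ∃ b ∈ B w', G.Adj a b

/-- Planarity via Wagner's theorem: no `K₅` minor and no `K₃,₃` minor. -/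
def PlanarWagner {V : Type*} (G : SimpleGraph V) : Prop :=
  ¬ HasMinor G (completeGraph (Fin 5)) ∧
    ¬ HasMinor G (completeBipartiteGraph (Fin 3) (Fin 3))

/-- A subdivision of the `k`-wheel in `G` with hub `v`. -/
structure WheelSubdivision {V : Type*} (G : SimpleGraph V) (v : V) (k : ℕ) where
  b : Fin k → V
  binj : Function.Injective b
  bne : ∀ i, b i ≠ v
  spoke : ∀ i : Fin k, G.Walk v (b i)
  spokePath : ∀ i, (spoke i).IsPath
  seg : ∀ i : Fin k, G.Walk (b i) (b (finRotate k i))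
  segPath : ∀ i, (seg i).IsPath
  vNotinSeg : ∀ i, v ∉ (seg i).support
  spokeDisj : ∀ i j, i ≠ j →
    {x | x ∈ (spoke i).support} ∩ {x | x ∈ (spoke j).support} = {v}
  spokeSegDisj : ∀ i j,
    {x | x ∈ (spoke i).support} ∩ {x | x ∈ (seg j).support} ⊆
      ({b i} : Set V) ∩ {b j, b (finRotate k j)}
  segDisj : ∀ i j, i ≠ j →
    {x | x ∈ (seg i).support} ∩ {x | x ∈ (seg j).support} ⊆
      ({b i, b (finRotate k i)} : Set V) ∩ {b j, b (finRotate k j)}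

/-- A subdivision of the `k`-dipole with poles `u`, `v`: `k` internally vertex-disjoint
`u`–`v` paths of length at least `2`. -/
structure DipoleSubdivision {V : Type*} (G : SimpleGraph V) (u v : V) (k : ℕ) where
  path : Fin k → G.Walk u v
  isPath : ∀ i, (path i).IsPath
  len : ∀ i, 2 ≤ (path i).length
  disj : ∀ i j, i ≠ j →
    {x | x ∈ (path i).support} ∩ {x | x ∈ (path j).support} = ({u, v} : Set V)

/-- A separation of `G`. -/
def IsSeparation {V : Type*} (G : SimpleGraph V) (A B : Set V) : Prop :=
  A ∪ B = Set.univ ∧ ∀ a ∈ A \ B, ∀ b ∈ B \ A, ¬ G.Adj a b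

/-- `μ(X,Y)`: the minimum order of a separation `(A,B)` with `X ⊆ A` and `Y ⊆ B`. -/
noncomputable def muSep {V : Type*} (G : SimpleGraph V) (X Y : Set V) : ℕ :=
  sInf {n | ∃ A B : Set V, IsSeparation G A B ∧ X ⊆ A ∧ Y ⊆ B ∧ (A ∩ B).ncard = n}

def IsMaximalClique {V : Type*} (G : SimpleGraph V) (K : Set V) : Prop :=
  G.IsClique K ∧ ∀ K' : Set V, G.IsClique K' → K ⊆ K' → K' = K

/-- `G` is proper chordal: it has a tree-layout in which every maximal clique is an
interval of a root-to-leaf path. -/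
def ProperChordal {V : Type*} (G : SimpleGraph V) : Prop :=
  ∃ L : TreeLayout G, ∀ K : Set V, IsMaximalClique G K →
    ∃ a b : V, L.Anc a b ∧ K = L.interval a b

/-- A topological-minor model (subdivision embedding) of `H` in `G`. -/
structure TopMinorEmbedding {W V : Type*} (H : SimpleGraph W) (G : SimpleGraph V) where
  φ : W → V
  inj : Function.Injective φ
  path : ∀ ⦃a b : W⦄, H.Adj a b → G.Walk (φ a) (φ b)
  isPath : ∀ ⦃a b : W⦄ (h : H.Adj a b), (path h).IsPath
  branchOnPath : ∀ ⦃a b : W⦄ (h : H.Adj a b) (w : W),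
    φ w ∈ (path h).support → w = a ∨ w = b
  disj : ∀ ⦃a b c d : W⦄ (hab : H.Adj a b) (hcd : H.Adj c d), s(a, b) ≠ s(c, d) →
    {x | x ∈ (path hab).support} ∩ {x | x ∈ (path hcd).support} ⊆
      ({φ a, φ b} : Set V) ∩ {φ c, φ d}

/-- A subdivision of the star `K_{1,s}` in `H` with all leaves in `X`. -/
structure StarSubdivision {V : Type*} (H : SimpleGraph V) (X : Set V) (s : ℕ) where
  center : V
  leaf : Fin s → V
  leafInj : Function.Injective leaf
  leafX : ∀ i, leaf i ∈ X
  leafNe : ∀ i, leaf i ≠ center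
  path : ∀ i : Fin s, H.Walk center (leaf i)
  isPath : ∀ i, (path i).IsPath
  disj : ∀ i j, i ≠ j →
    {x | x ∈ (path i).support} ∩ {x | x ∈ (path j).support} = {center}

/-- The weight `w(t,U)` of a set `U` at a node `t` of a tree decomposition is at most `a`:
`|β(t) ∩ U|` plus the number of a suitable family of adhesions incident to `t` whose union
hits all paths from `β(t)` to `U ∖ β(t)` is at most `a`. -/
def WeightLE {V : Type*} {G : SimpleGraph V} (D : TreeDecomp G) (U : Set V) (t : D.ι)
    (a : ℕ) : Prop :=
  ∃ F : Set D.ι, (∀ s ∈ F, D.tree.Adj t s) ∧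
    (D.bag t ∩ U).ncard + F.ncard ≤ a ∧
    ∀ ⦃x y : V⦄ (p : G.Walk x y), x ∈ D.bag t → y ∈ U \ D.bag t →
      ∃ z ∈ p.support, ∃ s ∈ F, z ∈ D.bag t ∩ D.bag s

/-- The graph obtained from `G` by subdividing the edge `xy` into a path with `n + 1`
new internal vertices. -/
def subdivideEdge {V : Type*} (G : SimpleGraph V) (x y : V) (n : ℕ) :
    SimpleGraph (V ⊕ Fin (n + 1)) :=
  SimpleGraph.fromRel (fun a b =>
    (∃ u w : V, a = Sum.inl u ∧ b = Sum.inl w ∧ G.Adj u w ∧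
      ¬(u = x ∧ w = y) ∧ ¬(u = y ∧ w = x)) ∨
    (a = Sum.inl x ∧ b = Sum.inr 0) ∨
    (∃ i : Fin n, a = Sum.inr i.castSucc ∧ b = Sum.inr i.succ) ∨
    (a = Sum.inr (Fin.last n) ∧ b = Sum.inl y))


section AuxTree

variable {V : Type*} {T : SimpleGraph V}

private lemma aux_path_length (hT : T.IsTree) {u v : V} (W : T.Walk u v) (hW : W.IsPath) :
    W.length = T.dist u v := by
  obtain ⟨q, hq, hql⟩ := hT.isConnected.exists_path_of_dist u v
  have : W = q := by simpa using hT.IsAcyclic.path_unique ⟨W, hW⟩ ⟨q, hq⟩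
  rw [this, hql]

private lemma aux_support_dist (hT : T.IsTree) {u v : V} (W : T.Walk u v) (hW : W.IsPath)
    {z : V} (hz : z ∈ W.support) : T.dist u z + T.dist z v = T.dist u v := by
  classical
  have h1 := aux_path_length hT _ (hW.takeUntil hz)
  have h2 := aux_path_length hT _ (hW.dropUntil hz)
  have h3 := congrArg Walk.length (W.take_spec hz)
  rw [Walk.length_append] at h3
  have h4 := aux_path_length hT W hW
  omega

private lemma aux_anc_total (hT : T.IsTree) {r x y w : V} (hx : AncIn T r x w)
    (hy : AncIn T r y w) : AncIn T r x y ∨ AncIn T r y x := by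
  classical
  unfold AncIn at *
  obtain ⟨p1, hp1, hl1⟩ := hT.isConnected.exists_path_of_dist r x
  obtain ⟨p2, hp2, hl2⟩ := hT.isConnected.exists_path_of_dist x w
  obtain ⟨q1, hq1, hm1⟩ := hT.isConnected.exists_path_of_dist r y
  obtain ⟨q2, hq2, hm2⟩ := hT.isConnected.exists_path_of_dist y w
  have hWlen : (p1.append p2).length = T.dist r w := by rw [Walk.length_append]; omega
  have hW'len : (q1.append q2).length = T.dist r w := by rw [Walk.length_append]; omega
  have hWp : (p1.append p2).IsPath := Walk.isPath_of_length_eq_dist _ hWlen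
  have hW'p : (q1.append q2).IsPath := Walk.isPath_of_length_eq_dist _ hW'len
  have hWW' : p1.append p2 = q1.append q2 := by
    simpa using hT.IsAcyclic.path_unique ⟨p1.append p2, hWp⟩ ⟨q1.append q2, hW'p⟩
  have hxW' : x ∈ (q1.append q2).support := by
    rw [← hWW']
    exact (Walk.mem_support_append_iff _ _).mpr (Or.inl p1.end_mem_support)
  have hyW' : y ∈ (q1.append q2).support :=
    (Walk.mem_support_append_iff _ _).mpr (Or.inl q1.end_mem_support)
  have hsplit := (q1.append q2).take_spec hyW'
  have hx2 : x ∈ ((q1.append q2).takeUntil y hyW').support ∨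
      x ∈ ((q1.append q2).dropUntil y hyW').support := by
    apply (Walk.mem_support_append_iff _ _).mp
    rw [hsplit]; exact hxW'
  rcases hx2 with h | h
  · left; exact aux_support_dist hT _ (hW'p.takeUntil hyW') h
  · right
    have h5 : T.dist y x + T.dist x w = T.dist y w :=
      aux_support_dist hT _ (hW'p.dropUntil hyW') h
    omega

private lemma aux_anc_trans (hc : T.Connected) {r x y z : V} (h1 : AncIn T r x y)
    (h2 : AncIn T r y z) : AncIn T r x z := by
  unfold AncIn at *
  have t1 := hc.dist_triangle (u := x) (v := y) (w := z)
  have t2 := hc.dist_triangle (u := r) (v := x) (w := z)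
  omega

private lemma aux_step (hT : T.IsTree) {r x w w' : V} (h1 : AncIn T r x w)
    (h2 : AncIn T r w w' ∨ AncIn T r w' w) (h3 : T.dist r x ≤ T.dist r w') :
    AncIn T r x w' := by
  rcases h2 with h | h
  · exact aux_anc_trans hT.isConnected h1 h
  · rcases aux_anc_total hT h1 h with h4 | h4
    · exact h4
    · have h5 : T.dist w' x = 0 := by unfold AncIn at h4; omega
      have h6 : w' = x := hT.isConnected.dist_eq_zero_iff.mp h5
      subst h6
      unfold AncIn
      simp [SimpleGraph.dist_self]

private lemma aux_exists_layout {V : Type*} [Fintype V] [Nonempty V] (G : SimpleGraph V) :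
    ∃ (L : TreeLayout G) (n : ℕ), L.BandwidthLE n := by
  classical
  set n := Fintype.card V with hn
  obtain e := Fintype.equivFin V
  set T : SimpleGraph V :=
    { Adj := fun x y => Nat.dist (e x : ℕ) (e y : ℕ) = 1
      symm := by constructor; intro a b hab; rwa [Nat.dist_comm] at hab
      loopless := by constructor; intro a hab; rw [Nat.dist_self] at hab; exact one_ne_zero hab.symm }
    with hTdef
  have hadjT : ∀ a b : V, T.Adj a b ↔ Nat.dist (e a : ℕ) (e b : ℕ) = 1 := fun _ _ => Iff.rfl
  have key : ∀ (m : ℕ) (x y : V), (e x : ℕ) + m = (e y : ℕ) → T.Reachable x y := by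
    intro m
    induction m with
    | zero =>
      intro x y hxy
      have : x = y := e.injective (Fin.ext (by omega))
      rw [this]
    | succ m ih =>
      intro x y hxy
      have hb : (e x : ℕ) + 1 < n := by have := (e y).isLt; omega
      have hew : (e (e.symm ⟨(e x : ℕ) + 1, hb⟩) : ℕ) = (e x : ℕ) + 1 := by
        rw [Equiv.apply_symm_apply]
      have h1 : T.Adj x (e.symm ⟨(e x : ℕ) + 1, hb⟩) := by
        rw [hadjT, hew]; simp [Nat.dist]
      exact h1.reachable.trans (ih (e.symm ⟨(e x : ℕ) + 1, hb⟩) y (by omega))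
  have hreach : ∀ x y : V, T.Reachable x y := by
    intro x y
    rcases le_total (e x : ℕ) (e y : ℕ) with hle | hle
    · exact key ((e y : ℕ) - (e x : ℕ)) x y (by omega)
    · exact (key ((e x : ℕ) - (e y : ℕ)) y x (by omega)).symm
  have hconn : T.Connected := ⟨hreach⟩
  have hlow : ∀ (x y : V) (W : T.Walk x y), Nat.dist (e x : ℕ) (e y : ℕ) ≤ W.length := by
    intro x y W
    induction W with
    | nil => simp [Nat.dist_self]
    | @cons a c b hac W ih =>
      have htri := Nat.dist.triangle_inequality (e a : ℕ) (e c : ℕ) (e b : ℕ)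
      have h1 : Nat.dist (e a : ℕ) (e c : ℕ) = 1 := hac
      rw [Walk.length_cons]
      omega
  have hdist : ∀ x y : V, T.dist x y = Nat.dist (e x : ℕ) (e y : ℕ) := by
    have key2 : ∀ (m : ℕ) (x y : V), (e x : ℕ) + m = (e y : ℕ) → T.dist x y ≤ m := by
      intro m
      induction m with
      | zero =>
        intro x y hxy
        have : x = y := e.injective (Fin.ext (by omega))
        rw [this, SimpleGraph.dist_self]
      | succ m ih =>
        intro x y hxy
        have hb : (e x : ℕ) + 1 < n := by have := (e y).isLt; omega
        have hew : (e (e.symm ⟨(e x : ℕ) + 1, hb⟩) : ℕ) = (e x : ℕ) + 1 := by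
          rw [Equiv.apply_symm_apply]
        have h1 : T.Adj x (e.symm ⟨(e x : ℕ) + 1, hb⟩) := by
          rw [hadjT, hew]; simp [Nat.dist]
        have h2 := SimpleGraph.dist_le h1.toWalk
        have h3 : h1.toWalk.length = 1 := rfl
        have h4 := hconn.dist_triangle (u := x) (v := e.symm ⟨(e x : ℕ) + 1, hb⟩) (w := y)
        have h5 := ih (e.symm ⟨(e x : ℕ) + 1, hb⟩) y (by omega)
        omega
    intro x y
    apply le_antisymm
    · rcases le_total (e x : ℕ) (e y : ℕ) with hle | hle
      · have := key2 ((e y : ℕ) - (e x : ℕ)) x y (by omega)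
        have hd : Nat.dist (e x : ℕ) (e y : ℕ) = (e y : ℕ) - (e x : ℕ) := by
          simp [Nat.dist]; omega
        omega
      · have := key2 ((e x : ℕ) - (e y : ℕ)) y x (by omega)
        have hd : Nat.dist (e x : ℕ) (e y : ℕ) = (e x : ℕ) - (e y : ℕ) := by
          simp [Nat.dist]; omega
        rw [SimpleGraph.dist_comm] at this
        omega
    · obtain ⟨W, hW⟩ := (hreach x y).exists_walk_length_eq_dist
      rw [← hW]
      exact hlow x y W
  have hacy : T.IsAcyclic := by
    rw [SimpleGraph.isAcyclic_iff_forall_adj_isBridge]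
    intro x y hxy
    rw [SimpleGraph.isBridge_iff]
    rintro ⟨W⟩
    have hd1 : Nat.dist (e x : ℕ) (e y : ℕ) = 1 := hxy
    have claim : ∀ a c : V, (T \ SimpleGraph.fromEdgeSet {s(x, y)}).Adj a c →
        (e a : ℕ) ≤ min (e x : ℕ) (e y : ℕ) → (e c : ℕ) ≤ min (e x : ℕ) (e y : ℕ) := by
      intro a c hac hle
      rw [SimpleGraph.sdiff_adj, SimpleGraph.fromEdgeSet_adj] at hac
      obtain ⟨hac1, hac2⟩ := hac
      simp only [Set.mem_singleton_iff, Sym2.eq_iff] at hac2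
      have hd2 : Nat.dist (e a : ℕ) (e c : ℕ) = 1 := hac1
      have hane : a ≠ c := by
        rintro rfl
        rw [Nat.dist_self] at hd2
        omega
      by_contra hgt
      push_neg at hgt
      have hax_or : ((e a : ℕ) = (e x : ℕ) ∧ (e c : ℕ) = (e y : ℕ)) ∨
          ((e a : ℕ) = (e y : ℕ) ∧ (e c : ℕ) = (e x : ℕ)) := by
        simp only [Nat.dist] at hd1 hd2
        omega
      rcases hax_or with ⟨h1, h2⟩ | ⟨h1, h2⟩
      · exact hac2 ⟨Or.inl ⟨e.injective (Fin.ext h1), e.injective (Fin.ext h2)⟩, hane⟩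
      · exact hac2 ⟨Or.inr ⟨e.injective (Fin.ext h1), e.injective (Fin.ext h2)⟩, hane⟩
    have hinv : ∀ (a b : V), (T \ SimpleGraph.fromEdgeSet {s(x, y)}).Walk a b →
        ((e a : ℕ) ≤ min (e x : ℕ) (e y : ℕ) ↔ (e b : ℕ) ≤ min (e x : ℕ) (e y : ℕ)) := by
      intro a b W
      induction W with
      | nil => exact Iff.rfl
      | @cons a c b hac W ih =>
        exact Iff.trans ⟨claim a c hac, claim c a hac.symm⟩ ih
    have := hinv x y W
    simp only [Nat.dist] at hd1
    omega
  have hn0 : 0 < n := Fintype.card_pos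
  have her : (e (e.symm ⟨0, hn0⟩) : ℕ) = 0 := by rw [Equiv.apply_symm_apply]
  refine ⟨⟨T, ⟨hconn, hacy⟩, e.symm ⟨0, hn0⟩, ?_⟩, n, ?_⟩
  · intro a b _
    rcases le_total (e a : ℕ) (e b : ℕ) with hle | hle
    · left
      unfold AncIn
      rw [hdist, hdist, hdist, her]
      simp [Nat.dist]; omega
    · right
      unfold AncIn
      rw [hdist, hdist, hdist, her]
      simp [Nat.dist]; omega
  · intro a b _
    show T.dist a b ≤ n
    rw [hdist]
    have := (e a).isLt
    have := (e b).isLt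
    simp [Nat.dist]; omega

end AuxTree

/-- a graph of treebandwidth at most `k` has a `p`-centered colouring
with at most `p·k + 1` colours. -/
theorem pCentered_of_treebandwidth {V : Type*} [Fintype V] (G : SimpleGraph V) (k : ℕ)
    (h : treebandwidth G ≤ k) (p : ℕ) (hp : 0 < p) :
    ∃ c : V → ℕ, (Set.range c).ncard ≤ p * k + 1 ∧ IsPCenteredColoring G p c := by
  classical
  rcases isEmpty_or_nonempty V with hV | hV
  · refine ⟨fun _ => 0, ?_, ?_⟩
    · rw [Set.range_eq_empty]
      simp
    · intro S hS _
      obtain ⟨v, _⟩ := hS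
      exact (hV.false v).elim
  · obtain ⟨L0, n0, hL0⟩ := aux_exists_layout G
    have hne : {k | ∃ L : TreeLayout G, L.BandwidthLE k}.Nonempty := ⟨n0, L0, hL0⟩
    have hmem := Nat.sInf_mem hne
    obtain ⟨L, hL⟩ := hmem
    have hLk : L.BandwidthLE k := fun x y hxy => le_trans (hL hxy) h
    have hT := L.isTree
    have hTc : L.tree.Connected := hT.isConnected
    set m := p * k + 1 with hm
    set dep : V → ℕ := fun v => L.tree.dist L.root v with hdep
    refine ⟨fun v => dep v % m, ?_, ?_⟩
    · have hsub : Set.range (fun v => dep v % m) ⊆ ↑(Finset.range m) := by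
        rintro _ ⟨v, rfl⟩
        simp only [Finset.coe_range, Set.mem_Iio]
        exact Nat.mod_lt _ (by omega)
      calc (Set.range (fun v => dep v % m)).ncard
          ≤ (↑(Finset.range m) : Set ℕ).ncard :=
            Set.ncard_le_ncard hsub (Finset.range m).finite_toSet
        _ = m := by rw [Set.ncard_coe_finset, Finset.card_range]
    · intro S hS hSconn
      by_cases hcard : p < ((fun v => dep v % m) '' S).ncard
      · exact Or.inl hcard
      · push_neg at hcard
        right
        obtain ⟨x, hxS, hxmin⟩ := Set.exists_min_image S dep S.toFinite hS
        refine ⟨x, hxS, ?_⟩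
        -- every vertex of S is a descendant of x
        have hanc : ∀ w ∈ S, AncIn L.tree L.root x w := by
          have step : ∀ (a b : ↑S) (_ : (G.induce S).Walk a b),
              AncIn L.tree L.root x a.1 → AncIn L.tree L.root x b.1 := by
            intro a b W
            induction W with
            | nil => exact id
            | @cons a c b hac W ih =>
              intro hxa
              have hGac : G.Adj a.1 c.1 := hac
              have h2 := L.layout hGac
              have h3 : dep x ≤ dep c.1 := hxmin c.1 c.2
              exact ih (aux_step hT hxa h2 h3)
          intro w hw
          obtain ⟨W⟩ := hSconn.preconnected ⟨x, hxS⟩ ⟨w, hw⟩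
          refine step _ _ W ?_
          unfold AncIn
          simp [SimpleGraph.dist_self]
        intro y hyS hcy
        by_contra hne2
        have hancy := hanc y hyS
        have hxy : dep x ≤ dep y := hxmin y hyS
        have hdepne : dep x ≠ dep y := by
          intro heq
          have h5 : L.tree.dist x y = 0 := by
            unfold AncIn at hancy
            change dep x + L.tree.dist x y = dep y at hancy
            omega
          exact hne2 (hTc.dist_eq_zero_iff.mp h5).symm
        have hmod : dep x % m = dep y % m := hcy.symm
        have hdvd : m ∣ dep y - dep x := (Nat.modEq_iff_dvd' hxy).mp hmod
        have hge : dep x + m ≤ dep y := by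
          have := Nat.le_of_dvd (by omega) hdvd
          omega
        -- first-crossing lemma along walks in S
        have crossing : ∀ (a b : ↑S) (_ : (G.induce S).Walk a b) (s : ℕ),
            dep a.1 < s → s ≤ dep b.1 → ∃ z ∈ S, s ≤ dep z ∧ dep z < s + k := by
          intro a b W
          induction W with
          | nil => intro s h1 h2; omega
          | @cons a c b hac W ih =>
            intro s h1 h2
            have hGac : G.Adj a.1 c.1 := hac
            have hcomp := L.layout hGac
            have hdk : L.tree.dist a.1 c.1 ≤ k := hLk hGac
            have hdk' : L.tree.dist c.1 a.1 ≤ k := by rwa [SimpleGraph.dist_comm] at hdk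
            have hstep : dep c.1 ≤ dep a.1 + k := by
              unfold AncIn at hcomp
              change (dep a.1 + L.tree.dist a.1 c.1 = dep c.1) ∨
                (dep c.1 + L.tree.dist c.1 a.1 = dep a.1) at hcomp
              omega
            by_cases hc : s ≤ dep c.1
            · exact ⟨c.1, c.2, hc, by omega⟩
            · push_neg at hc
              exact ih s hc h2
        obtain ⟨W⟩ := hSconn.preconnected ⟨x, hxS⟩ ⟨y, hyS⟩
        have hwj : ∀ j : Fin p, ∃ z ∈ S,
            dep x + j.1 * k + 1 ≤ dep z ∧ dep z < dep x + j.1 * k + 1 + k := by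
          intro j
          have hjk : j.1 * k + k ≤ p * k := by
            have h1 : (j.1 + 1) * k ≤ p * k := Nat.mul_le_mul_right k j.2
            have h2 : (j.1 + 1) * k = j.1 * k + k := by ring
            omega
          exact crossing ⟨x, hxS⟩ ⟨y, hyS⟩ W (dep x + j.1 * k + 1)
            (by show dep x < dep x + j.1 * k + 1; omega)
            (by show dep x + j.1 * k + 1 ≤ dep y; omega)
        choose w hwS hw1 hw2 using hwj
        -- the selected vertices
        set vsel : Fin (p + 1) → V := fun j =>
          if hj : j.1 = 0 then x else w ⟨j.1 - 1, by have := j.isLt; omega⟩ with hvsel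
        have hvselS : ∀ j, vsel j ∈ S := by
          intro j
          by_cases hj : j.1 = 0
          · have hv : vsel j = x := by rw [hvsel]; exact dif_pos hj
            rw [hv]; exact hxS
          · have hb : j.1 - 1 < p := by have := j.isLt; omega
            have hv : vsel j = w ⟨j.1 - 1, hb⟩ := by rw [hvsel]; exact dif_neg hj
            rw [hv]; exact hwS _
        have hlo : ∀ j : Fin (p + 1), dep x ≤ dep (vsel j) ∧ dep (vsel j) ≤ dep x + p * k := by
          intro j
          by_cases hj : j.1 = 0
          · have hv : vsel j = x := by rw [hvsel]; exact dif_pos hj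
            rw [hv]
            omega
          · have hb : j.1 - 1 < p := by have := j.isLt; omega
            have hv : vsel j = w ⟨j.1 - 1, hb⟩ := by rw [hvsel]; exact dif_neg hj
            rw [hv]
            have h1 := hw1 ⟨j.1 - 1, hb⟩
            have h2 := hw2 ⟨j.1 - 1, hb⟩
            have h3 : ((⟨j.1 - 1, hb⟩ : Fin p) : ℕ) = j.1 - 1 := rfl
            rw [h3] at h1 h2
            have h4 : (j.1 - 1) * k + k ≤ p * k := by
              have h5 : (j.1 - 1 + 1) * k ≤ p * k := Nat.mul_le_mul_right k (by omega)
              have h6 : (j.1 - 1 + 1) * k = (j.1 - 1) * k + k := by ring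
              omega
            omega
        have hwin : ∀ (j : Fin (p + 1)), j.1 ≠ 0 →
            dep x + (j.1 - 1) * k + 1 ≤ dep (vsel j) ∧
              dep (vsel j) ≤ dep x + (j.1 - 1) * k + k := by
          intro j hj
          have hb : j.1 - 1 < p := by have := j.isLt; omega
          have hv : vsel j = w ⟨j.1 - 1, hb⟩ := by rw [hvsel]; exact dif_neg hj
          rw [hv]
          have h1 := hw1 ⟨j.1 - 1, hb⟩
          have h2 := hw2 ⟨j.1 - 1, hb⟩
          have h3 : ((⟨j.1 - 1, hb⟩ : Fin p) : ℕ) = j.1 - 1 := rfl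
          rw [h3] at h1 h2
          exact ⟨h1, by omega⟩
        have hwin0 : dep (vsel 0) = dep x := by simp [hvsel]
        -- colours of selected vertices are pairwise distinct
        have hinj : Function.Injective (fun j : Fin (p + 1) => dep (vsel j) % m) := by
          intro i j hij
          simp only at hij
          have hdi : dep (vsel i) = dep (vsel j) := by
            have h1 := (hlo i).1
            have h2 := (hlo i).2
            have h3 := (hlo j).1
            have h4 := (hlo j).2
            rcases le_total (dep (vsel i)) (dep (vsel j)) with hle | hle
            · have := (Nat.modEq_iff_dvd' hle).mp hij
              have := Nat.eq_zero_of_dvd_of_lt this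
              rcases Nat.eq_zero_or_pos (dep (vsel j) - dep (vsel i)) with h0 | h0
              · omega
              · have := Nat.le_of_dvd h0 ((Nat.modEq_iff_dvd' hle).mp hij)
                omega
            · have hij' := hij.symm
              rcases Nat.eq_zero_or_pos (dep (vsel i) - dep (vsel j)) with h0 | h0
              · omega
              · have := Nat.le_of_dvd h0 ((Nat.modEq_iff_dvd' hle).mp hij')
                omega
          -- now conclude i = j from window disjointness
          by_contra hne3
          rcases Nat.eq_zero_or_pos i.1 with hi0 | hi0
          · have hj0 : j.1 ≠ 0 := by
              intro hj0
              exact hne3 (Fin.ext (by omega))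
            have := (hwin j hj0).1
            have hi0' : vsel i = vsel 0 := by
              congr 1
              exact Fin.ext (by simpa using hi0)
            rw [hi0', hwin0] at hdi
            omega
          · rcases Nat.eq_zero_or_pos j.1 with hj0 | hj0
            · have hi0' : i.1 ≠ 0 := by omega
              have := (hwin i hi0').1
              have hj0' : vsel j = vsel 0 := by
                congr 1
                exact Fin.ext (by simpa using hj0)
              rw [hj0', hwin0] at hdi
              omega
            · have hi0' : i.1 ≠ 0 := by omega
              have hj0' : j.1 ≠ 0 := by omega
              have hwi := hwin i hi0'
              have hwj' := hwin j hj0'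
              have hij2 : i.1 - 1 ≠ j.1 - 1 := by
                intro heq
                exact hne3 (Fin.ext (by omega))
              rcases Nat.lt_or_ge (i.1 - 1) (j.1 - 1) with hlt | hge2
              · have h6 : (i.1 - 1) * k + k ≤ (j.1 - 1) * k := by
                  have h7 : (i.1 - 1 + 1) * k ≤ (j.1 - 1) * k := Nat.mul_le_mul_right k hlt
                  have h8 : (i.1 - 1 + 1) * k = (i.1 - 1) * k + k := by ring
                  omega
                omega
              · have hlt : j.1 - 1 < i.1 - 1 := by omega
                have h6 : (j.1 - 1) * k + k ≤ (i.1 - 1) * k := by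
                  have h7 : (j.1 - 1 + 1) * k ≤ (i.1 - 1) * k := Nat.mul_le_mul_right k hlt
                  have h8 : (j.1 - 1 + 1) * k = (j.1 - 1) * k + k := by ring
                  omega
                omega
        -- derive the contradiction with hcard
        have hsub2 : ↑(Finset.image (fun j : Fin (p + 1) => dep (vsel j) % m) Finset.univ) ⊆
            (fun v => dep v % m) '' S := by
          intro z hz
          simp only [Finset.coe_image, Finset.coe_univ, Set.image_univ, Set.mem_range] at hz
          obtain ⟨j, rfl⟩ := hz
          exact ⟨vsel j, hvselS j, rfl⟩
        have hcount : p + 1 ≤ ((fun v => dep v % m) '' S).ncard := by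
          have h1 : (Finset.image (fun j : Fin (p + 1) => dep (vsel j) % m)
              Finset.univ).card = p + 1 := by
            rw [Finset.card_image_of_injective _ hinj, Finset.card_univ, Fintype.card_fin]
          calc p + 1 = ((Finset.image (fun j : Fin (p + 1) => dep (vsel j) % m)
                Finset.univ : Finset ℕ) : Set ℕ).ncard := by
                rw [Set.ncard_coe_finset, h1]
            _ ≤ _ := Set.ncard_le_ncard hsub2 (S.toFinite.image _)
        omega
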